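/- The system f₁ = (1−f₁)^{4/3}(1−f₂)^{2/3}, f₂ = (1−f₁)^{2/3}(1−f₂)^{4/3} has a unique solution with 0 < f₁, f₂ < 1, and for this solution (6/π²)(L(f₁) + L(f₂)) = 4/5, where L(x) = Li₂(x) + ½ log(x) log(1−x) is the Rogers dilogarithm. -/

import Mathlib

/-- The dilogarithm function `Li₂(x) = Σ_{n≥1} xⁿ/n²`. -/
noncomputable def Li2 (x : ℝ) : ℝ := ∑' n : ℕ, x ^ (n + 1) / ((n : ℝ) + 1) ^ 2

/-- The Rogers dilogarithm `L(x) = Li₂(x) + ½ log(x) log(1−x)`. -/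
noncomputable def RogersL (x : ℝ) : ℝ := Li2 x + (1 / 2) * Real.log x * Real.log (1 - x)

open Real Filter Set Topology

lemma li2_hasDerivAt {x : ℝ} (hx : x ∈ Set.Ioo (0:ℝ) 1) :
    HasDerivAt Li2 (-Real.log (1 - x) / x) x := by
  obtain ⟨hx0, hx1⟩ := hx
  set r : ℝ := (1 + x) / 2 with hr
  have hxr : x < r := by simp only [hr]; linarith
  have hr0 : 0 < r := by positivity
  have hr1 : r < 1 := by simp only [hr]; linarith
  have key : HasDerivAt Li2 (∑' n : ℕ, x ^ n / ((n:ℝ) + 1)) x := by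
    refine hasDerivAt_tsum_of_isPreconnected (u := fun n : ℕ => r ^ n)
      (F := ℝ) (g' := fun n y => y ^ n / ((n:ℝ) + 1)) (y₀ := 0)
      (summable_geometric_of_lt_one hr0.le hr1) (isOpen_Ioo (a := -r) (b := r))
      (convex_Ioo _ _).isPreconnected ?_ ?_ ⟨by linarith, hr0⟩ ?_ ⟨by linarith, hxr⟩
    · intro n y _
      have hne : ((n:ℝ) + 1) ≠ 0 := by positivity
      have h := (hasDerivAt_pow (n + 1) y).div_const (((n:ℝ) + 1) ^ 2)
      refine h.congr_deriv (Eq.symm ?_)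
      push_cast
      field_simp
    · intro n y hy
      have hyr : |y| ≤ r := by rw [abs_le]; exact ⟨hy.1.le, hy.2.le⟩
      have h1 : |y| ^ n ≤ r ^ n := pow_le_pow_left₀ (abs_nonneg y) hyr n
      have h2 : (1:ℝ) ≤ |(n:ℝ) + 1| := by
        rw [abs_of_pos (by positivity)]
        linarith [Nat.cast_nonneg (α := ℝ) n]
      simp only [Real.norm_eq_abs, abs_div, abs_pow]
      calc |y| ^ n / |(n:ℝ) + 1| ≤ |y| ^ n := div_le_self (by positivity) h2
        _ ≤ r ^ n := h1
    · have : (fun n : ℕ => (0:ℝ) ^ (n + 1) / ((n:ℝ) + 1) ^ 2) = fun _ => 0 := by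
        funext n; simp
      rw [show (fun n : ℕ => (0:ℝ) ^ (n + 1) / ((n:ℝ) + 1) ^ 2) = fun _ => (0:ℝ) from this]
      exact summable_zero
  have hs := hasSum_pow_div_log_of_abs_lt_one (x := x) (abs_lt.2 ⟨by linarith, hx1⟩)
  have h := hs.mul_left x⁻¹
  have hfe : (fun i : ℕ => x⁻¹ * (x ^ (i + 1) / ((i:ℝ) + 1))) = fun n : ℕ => x ^ n / ((n:ℝ) + 1) := by
    funext i
    rw [pow_succ']
    field_simp
  rw [hfe] at h
  have : -Real.log (1 - x) / x = x⁻¹ * -Real.log (1 - x) := by ring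
  rw [this]
  rwa [h.tsum_eq] at key

lemma summable_inv_sq : Summable (fun n : ℕ => 1 / ((n:ℝ) + 1) ^ 2) := by
  have := Real.summable_one_div_nat_pow.mpr (le_refl 2)
  have h := (summable_nat_add_iff 1).mpr this
  simpa using h

lemma tendsto_li2 {a : ℝ} {l : Filter ℝ} (hmem : ∀ᶠ x in l, x ∈ Set.Icc (0:ℝ) 1)
    (ha : Tendsto (fun x => x) l (𝓝 a)) : Tendsto Li2 l (𝓝 (Li2 a)) := by
  apply tendsto_tsum_of_dominated_convergence (bound := fun n : ℕ => 1 / ((n:ℝ) + 1) ^ 2)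
    summable_inv_sq
  · intro k
    exact (ha.pow (k + 1)).div_const _
  · filter_upwards [hmem] with x hx k
    rw [Real.norm_eq_abs, abs_div, abs_pow, abs_of_pos (by positivity : (0:ℝ) < ((k:ℝ)+1)^2)]
    have hb : |x| ^ (k + 1) ≤ 1 := by
      apply pow_le_one₀ (abs_nonneg x)
      rw [abs_le]
      exact ⟨by linarith [hx.1], hx.2⟩
    gcongr

lemma li2_one : Li2 1 = Real.pi ^ 2 / 6 := by
  have h2 : HasSum (fun n : ℕ => (1:ℝ) / ((n:ℝ) + 1) ^ 2) (Real.pi ^ 2 / 6) := by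
    have hinj : Function.Injective Nat.succ := Nat.succ_injective
    have hz : ∀ n ∉ Set.range Nat.succ, (1:ℝ) / (n:ℝ) ^ 2 = 0 := by
      intro n hn
      have : n = 0 := by
        rcases n with _ | m
        · rfl
        · exact absurd ⟨m, rfl⟩ hn
      simp [this]
    have h3 := (hinj.hasSum_iff hz).mpr hasSum_zeta_two
    convert h3 using 2 with n
    simp only [Function.comp, Nat.succ_eq_add_one]
    push_cast
    ring
  unfold Li2
  rw [show (fun n : ℕ => (1:ℝ) ^ (n + 1) / ((n:ℝ) + 1) ^ 2) = fun n : ℕ => (1:ℝ) / ((n:ℝ) + 1) ^ 2 from by funext n; rw [one_pow]]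
  exact h2.tsum_eq

lemma rogers_hasDerivAt {x : ℝ} (hx : x ∈ Set.Ioo (0:ℝ) 1) :
    HasDerivAt RogersL (-(Real.log (1 - x) / x + Real.log x / (1 - x)) / 2) x := by
  obtain ⟨hx0, hx1⟩ := hx
  have hne : x ≠ 0 := ne_of_gt hx0
  have h1ne : (1 : ℝ) - x ≠ 0 := by linarith
  have h1 := li2_hasDerivAt ⟨hx0, hx1⟩
  have hlx := Real.hasDerivAt_log hne
  have hl1x : HasDerivAt (fun y : ℝ => Real.log (1 - y)) (-(1 - x)⁻¹) x := by
    have h := (((hasDerivAt_id x).const_sub 1)).log h1ne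
    refine h.congr_deriv (Eq.symm ?_)
    simp only [id]; ring
  have h2 := ((hlx.mul hl1x).const_mul (1/2 : ℝ))
  have hsum := h1.add h2
  have : RogersL = fun y => Li2 y + (1/2) * (Real.log y * Real.log (1 - y)) := by
    funext y; unfold RogersL; ring
  rw [this]
  refine hsum.congr_deriv (Eq.symm ?_)
  field_simp
  ring

lemma tendsto_loglog_zero :
    Tendsto (fun x => Real.log x * Real.log (1 - x)) (𝓝[>] (0:ℝ)) (𝓝 0) := by
  have h1 : Tendsto (fun x : ℝ => Real.log x * x) (𝓝[>] 0) (𝓝 0) := by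
    have := tendsto_log_mul_rpow_nhdsGT_zero one_pos
    simpa [Real.rpow_one] using this
  have h2 : Tendsto (fun x : ℝ => Real.log (1 - x) / x) (𝓝[>] 0) (𝓝 (-1)) := by
    have hd : HasDerivAt (fun y : ℝ => Real.log (1 - y)) (-1) 0 := by
      have h := (((hasDerivAt_id (0:ℝ)).const_sub 1)).log (by norm_num)
      refine h.congr_deriv (Eq.symm ?_)
      norm_num
    have hslope := hasDerivAt_iff_tendsto_slope.mp hd
    have hmono : 𝓝[>] (0:ℝ) ≤ 𝓝[≠] (0:ℝ) := by
      apply nhdsWithin_mono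
      intro y hy
      exact ne_of_gt hy
    have := hslope.mono_left hmono
    apply this.congr
    intro y
    simp [slope]
    ring
  have h3 := h1.mul h2
  rw [show (0:ℝ) * (-1) = 0 from by ring] at h3
  apply h3.congr'
  filter_upwards [self_mem_nhdsWithin] with x (hx : 0 < x)
  have : x ≠ 0 := ne_of_gt hx
  field_simp

lemma tendsto_loglog_one :
    Tendsto (fun x => Real.log x * Real.log (1 - x)) (𝓝[<] (1:ℝ)) (𝓝 0) := by
  have hmap : Tendsto (fun x : ℝ => 1 - x) (𝓝[<] 1) (𝓝[>] 0) := by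
    apply tendsto_nhdsWithin_of_tendsto_nhds_of_eventually_within
    · have h : Tendsto (fun x : ℝ => 1 - x) (𝓝 1) (𝓝 0) := by
        have hc : Continuous (fun x : ℝ => 1 - x) := by continuity
        have := hc.tendsto (1:ℝ)
        simpa using this
      exact h.mono_left nhdsWithin_le_nhds
    · filter_upwards [self_mem_nhdsWithin] with x (hx : x < 1)
      exact sub_pos.2 hx
  have h := tendsto_loglog_zero.comp hmap
  apply h.congr
  intro x
  simp only [Function.comp]
  rw [sub_sub_cancel]
  ring

lemma tendsto_rogers_zero : Tendsto RogersL (𝓝[>] (0:ℝ)) (𝓝 0) := by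
  have hmem : ∀ᶠ x in 𝓝[>] (0:ℝ), x ∈ Set.Icc (0:ℝ) 1 := by
    filter_upwards [Ioo_mem_nhdsGT_of_mem (Set.mem_Ico.mpr ⟨le_refl (0:ℝ), one_pos⟩)] with x hx
    exact ⟨hx.1.le, hx.2.le⟩
  have hid : Tendsto (fun x : ℝ => x) (𝓝[>] (0:ℝ)) (𝓝 0) :=
    (continuous_id.tendsto 0).mono_left nhdsWithin_le_nhds
  have hli := tendsto_li2 hmem hid
  have hli0 : Li2 0 = 0 := by
    unfold Li2
    simp
  rw [hli0] at hli
  have h := hli.add (tendsto_loglog_zero.const_mul (1/2 : ℝ))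
  rw [show (0:ℝ) + 1/2 * 0 = 0 from by ring] at h
  apply h.congr
  intro x
  unfold RogersL
  ring

lemma tendsto_rogers_one : Tendsto RogersL (𝓝[<] (1:ℝ)) (𝓝 (Real.pi ^ 2 / 6)) := by
  have hmem : ∀ᶠ x in 𝓝[<] (1:ℝ), x ∈ Set.Icc (0:ℝ) 1 := by
    filter_upwards [Ioo_mem_nhdsLT_of_mem (Set.mem_Ioc.mpr ⟨one_pos, le_refl (1:ℝ)⟩)] with x hx
    exact ⟨hx.1.le, hx.2.le⟩
  have hid : Tendsto (fun x : ℝ => x) (𝓝[<] (1:ℝ)) (𝓝 1) :=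
    (continuous_id.tendsto 1).mono_left nhdsWithin_le_nhds
  have hli := tendsto_li2 hmem hid
  rw [li2_one] at hli
  have h := hli.add (tendsto_loglog_one.const_mul (1/2 : ℝ))
  rw [show Real.pi ^ 2 / 6 + 1/2 * 0 = Real.pi ^ 2 / 6 from by ring] at h
  apply h.congr
  intro x
  unfold RogersL
  ring

lemma const_of_deriv_zero {F : ℝ → ℝ} (hF : ∀ x ∈ Set.Ioo (0:ℝ) 1, HasDerivAt F 0 x)
    {c : ℝ} (hlim : Tendsto F (𝓝[>] (0:ℝ)) (𝓝 c)) :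
    ∀ x ∈ Set.Ioo (0:ℝ) 1, F x = c := by
  have hconst : ∀ y z : ℝ, y ∈ Set.Ioo (0:ℝ) 1 → z ∈ Set.Ioo (0:ℝ) 1 → y ≤ z → F z = F y := by
    intro y z hy hz hyz
    refine constant_of_has_deriv_right_zero (f := F) (a := y) (b := z) ?_ ?_ z
      (Set.right_mem_Icc.mpr hyz)
    · intro t ht
      exact (hF t ⟨lt_of_lt_of_le hy.1 ht.1, lt_of_le_of_lt ht.2 hz.2⟩).continuousAt.continuousWithinAt
    · intro t ht
      exact (hF t ⟨lt_of_lt_of_le hy.1 ht.1, lt_of_lt_of_le ht.2 hz.2.le⟩).hasDerivWithinAt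
  intro x hx
  have hev : F =ᶠ[𝓝[>] (0:ℝ)] (fun _ => F x) := by
    filter_upwards [Ioo_mem_nhdsGT_of_mem (Set.mem_Ico.mpr ⟨le_refl (0:ℝ), hx.1⟩)] with y hy
    exact (hconst y x ⟨hy.1, hy.2.trans hx.2⟩ hx hy.2.le).symm
  have h2 : Tendsto F (𝓝[>] (0:ℝ)) (𝓝 (F x)) := tendsto_const_nhds.congr' hev.symm
  exact tendsto_nhds_unique h2 hlim

lemma rogers_reflection : ∀ x ∈ Set.Ioo (0:ℝ) 1, RogersL x + RogersL (1 - x) = Real.pi ^ 2 / 6 := by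
  have hmap : Tendsto (fun x : ℝ => 1 - x) (𝓝[>] (0:ℝ)) (𝓝[<] (1:ℝ)) := by
    apply tendsto_nhdsWithin_of_tendsto_nhds_of_eventually_within
    · have hc : Continuous (fun x : ℝ => 1 - x) := by continuity
      have := hc.tendsto (0:ℝ)
      simp only [sub_zero] at this
      exact this.mono_left nhdsWithin_le_nhds
    · filter_upwards [self_mem_nhdsWithin] with x (hx : 0 < x)
      simp only [Set.mem_Iio]
      linarith
  apply const_of_deriv_zero
  · intro x hx
    obtain ⟨hx0, hx1⟩ := hx
    have hx' : (1 - x) ∈ Set.Ioo (0:ℝ) 1 := ⟨by linarith, by linarith⟩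
    have h1 := rogers_hasDerivAt ⟨hx0, hx1⟩
    have hinner : HasDerivAt (fun y : ℝ => 1 - y) (-1) x := by
      have := ((hasDerivAt_id x).const_sub 1)
      simpa using this
    have h2 := (rogers_hasDerivAt hx').comp x hinner
    have h := h1.add h2
    refine h.congr_deriv (Eq.symm ?_)
    rw [show (1:ℝ) - (1 - x) = x from by ring]
    ring
  · have h := tendsto_rogers_zero.add (tendsto_rogers_one.comp hmap)
    rw [show (0:ℝ) + Real.pi ^ 2 / 6 = Real.pi ^ 2 / 6 from by ring] at h
    exact h

lemma rogers_landen : ∀ x ∈ Set.Ioo (0:ℝ) 1,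
    RogersL (x ^ 2) - 2 * RogersL x + 2 * RogersL (x / (1 + x)) = 0 := by
  apply const_of_deriv_zero
  · intro x hx
    obtain ⟨hx0, hx1⟩ := hx
    have hne : x ≠ 0 := ne_of_gt hx0
    have h1x : (0:ℝ) < 1 + x := by linarith
    have h1xne : (1:ℝ) + x ≠ 0 := ne_of_gt h1x
    have hsq : x ^ 2 ∈ Set.Ioo (0:ℝ) 1 := ⟨by positivity, by nlinarith⟩
    have hu : x / (1 + x) ∈ Set.Ioo (0:ℝ) 1 := by
      constructor
      · positivity
      · rw [div_lt_one h1x]; linarith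
    have hA : HasDerivAt (fun y : ℝ => RogersL (y ^ 2))
        (-(Real.log (1 - x ^ 2) / x ^ 2 + Real.log (x ^ 2) / (1 - x ^ 2)) / 2 * (2 * x)) x := by
      have h0 := HasDerivAt.comp (h₂ := RogersL) (h := fun y : ℝ => y ^ 2) x
        (rogers_hasDerivAt hsq) (hasDerivAt_pow 2 x)
      refine h0.congr_deriv (Eq.symm ?_)
      push_cast
      ring
    have hB := (rogers_hasDerivAt ⟨hx0, hx1⟩).const_mul (2:ℝ)
    have hin2 : HasDerivAt (fun y : ℝ => y / (1 + y)) (1 / (1 + x) ^ 2) x := by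
      have h := (hasDerivAt_id x).div ((hasDerivAt_id x).const_add 1) h1xne
      refine h.congr_deriv (Eq.symm ?_)
      simp only [id]; ring
    have hC := ((rogers_hasDerivAt hu).comp x hin2).const_mul (2:ℝ)
    have h := (hA.sub hB).add hC
    refine h.congr_deriv (Eq.symm ?_)
    symm
    have e1 : Real.log (x ^ 2) = 2 * Real.log x := by
      rw [Real.log_pow]; push_cast; ring
    have e2 : Real.log (1 - x ^ 2) = Real.log (1 - x) + Real.log (1 + x) := by
      rw [show (1:ℝ) - x ^ 2 = (1 - x) * (1 + x) from by ring,
        Real.log_mul (by linarith) h1xne]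
    have e3 : Real.log (x / (1 + x)) = Real.log x - Real.log (1 + x) :=
      Real.log_div hne h1xne
    have e4 : Real.log (1 - x / (1 + x)) = -Real.log (1 + x) := by
      rw [show (1:ℝ) - x / (1 + x) = (1 + x)⁻¹ from by field_simp; ring, Real.log_inv]
    rw [e1, e2, e3, e4]
    have hne2 : (1:ℝ) - x ≠ 0 := by linarith
    have hne3 : (1:ℝ) - x ^ 2 ≠ 0 := by nlinarith
    have hne4 : x / (1 + x) ≠ 0 := ne_of_gt hu.1
    have hne5 : (1:ℝ) - x / (1 + x) ≠ 0 := by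
      rw [show (1:ℝ) - x / (1 + x) = (1 + x)⁻¹ from by field_simp; ring]
      positivity
    field_simp
    ring
  · have hz := tendsto_rogers_zero
    have hmap1 : Tendsto (fun x : ℝ => x ^ 2) (𝓝[>] (0:ℝ)) (𝓝[>] (0:ℝ)) := by
      apply tendsto_nhdsWithin_of_tendsto_nhds_of_eventually_within
      · have := ((continuous_pow 2).tendsto (0:ℝ))
        simp only [ne_eq, OfNat.ofNat_ne_zero, not_false_eq_true, zero_pow] at this
        exact this.mono_left nhdsWithin_le_nhds
      · filter_upwards [self_mem_nhdsWithin] with x (hx : 0 < x)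
        exact pow_pos hx 2
    have hmap2 : Tendsto (fun x : ℝ => x / (1 + x)) (𝓝[>] (0:ℝ)) (𝓝[>] (0:ℝ)) := by
      apply tendsto_nhdsWithin_of_tendsto_nhds_of_eventually_within
      · have hc : ContinuousAt (fun x : ℝ => x / (1 + x)) 0 := by
          have hcc : Continuous (fun x : ℝ => 1 + x) := continuous_const.add continuous_id
          exact continuousAt_id.div hcc.continuousAt (by norm_num)
        have := hc.tendsto
        simp only [zero_div] at this
        exact this.mono_left nhdsWithin_le_nhds
      · filter_upwards [self_mem_nhdsWithin] with x (hx : 0 < x)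
        have : (0:ℝ) < 1 + x := by linarith
        exact div_pos hx this
    have h := ((hz.comp hmap1).sub (hz.const_mul 2)).add ((hz.comp hmap2).const_mul 2)
    rw [show ((0:ℝ) - 2 * 0) + 2 * 0 = 0 from by ring] at h
    apply h.congr
    intro x
    simp [Function.comp]

lemma sqrt5_sq : Real.sqrt 5 ^ 2 = 5 := Real.sq_sqrt (by norm_num)
lemma sqrt5_gt2 : 2 < Real.sqrt 5 := by
  nlinarith [sqrt5_sq, Real.sqrt_nonneg 5]
lemma sqrt5_lt3 : Real.sqrt 5 < 3 := by
  nlinarith [sqrt5_sq, Real.sqrt_nonneg 5]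

lemma rogers_value : RogersL ((3 - Real.sqrt 5) / 2) = Real.pi ^ 2 / 15 := by
  set s := Real.sqrt 5 with hs
  have hs2 := sqrt5_sq
  have h2 := sqrt5_gt2
  have h3 := sqrt5_lt3
  set ρ := (s - 1) / 2 with hρdef
  have hρ : ρ ∈ Set.Ioo (0:ℝ) 1 := ⟨by rw [hρdef]; linarith, by rw [hρdef]; linarith⟩
  have hρ2 : ρ ^ 2 = (3 - s) / 2 := by rw [hρdef]; linear_combination hs2 / 4
  have h1ρ : 1 - ρ = ρ ^ 2 := by rw [hρ2, hρdef]; ring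
  have huρ : ρ / (1 + ρ) = ρ ^ 2 := by
    rw [div_eq_iff (by rw [hρdef]; linarith : (1:ℝ) + ρ ≠ 0), hρdef]
    linear_combination (-(s - 1) / 8) * hs2
  have hrefl := rogers_reflection ρ hρ
  rw [h1ρ] at hrefl
  have hland := rogers_landen ρ hρ
  rw [huρ] at hland
  rw [← hρ2]
  linarith [hrefl, hland]

lemma sol_val : ((3 - Real.sqrt 5) / 2 : ℝ) ∈ Set.Ioo (0:ℝ) 1 :=
  ⟨by linarith [sqrt5_lt3], by linarith [sqrt5_gt2]⟩

lemma sol_eq_rpow : ((3 - Real.sqrt 5) / 2 : ℝ) =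
    (1 - (3 - Real.sqrt 5) / 2) ^ ((4:ℝ)/3) * (1 - (3 - Real.sqrt 5) / 2) ^ ((2:ℝ)/3) := by
  have h2 := sqrt5_gt2
  have hpos : (0:ℝ) < 1 - (3 - Real.sqrt 5) / 2 := by linarith
  rw [← Real.rpow_add hpos]
  norm_num
  linear_combination - sqrt5_sq / 4

lemma sol_unique : ∀ f : ℝ × ℝ,
    (0 < f.1 ∧ f.1 < 1 ∧ 0 < f.2 ∧ f.2 < 1) →
    f.1 = (1 - f.1) ^ ((4 : ℝ) / 3) * (1 - f.2) ^ ((2 : ℝ) / 3) →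
    f.2 = (1 - f.1) ^ ((2 : ℝ) / 3) * (1 - f.2) ^ ((4 : ℝ) / 3) →
    f = ((3 - Real.sqrt 5) / 2, (3 - Real.sqrt 5) / 2) := by
  rintro ⟨x, y⟩ ⟨hx0, hx1, hy0, hy1⟩ h1 h2
  simp only at h1 h2 ⊢
  have ha : (0:ℝ) < 1 - x := by linarith
  have hb : (0:ℝ) < 1 - y := by linarith
  set A := (1 - x) ^ ((2:ℝ)/3) with hA
  set B := (1 - y) ^ ((2:ℝ)/3) with hB
  have hApos : 0 < A := Real.rpow_pos_of_pos ha _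
  have hBpos : 0 < B := Real.rpow_pos_of_pos hb _
  have ha43 : (1 - x) ^ ((4:ℝ)/3) = A * A := by
    rw [hA, ← Real.rpow_add ha]; norm_num
  have hb43 : (1 - y) ^ ((4:ℝ)/3) = B * B := by
    rw [hB, ← Real.rpow_add hb]; norm_num
  rw [ha43] at h1
  rw [hb43] at h2
  -- h1 : x = A * A * B, h2 : y = A * (B * B)
  have hxy : x = y := by
    rcases lt_trichotomy x y with h | h | h
    · exfalso
      have hab : 1 - y < 1 - x := by linarith
      have hAB : B < A := by
        rw [hA, hB]
        exact Real.rpow_lt_rpow hb.le hab (by norm_num)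
      nlinarith
    · exact h
    · exfalso
      have hab : 1 - x < 1 - y := by linarith
      have hAB : A < B := by
        rw [hA, hB]
        exact Real.rpow_lt_rpow ha.le hab (by norm_num)
      nlinarith
  subst hxy
  have hAB : A = B := by rw [hA, hB]
  rw [← hAB] at h1
  -- h1 : x = A * A * A = (1-x)^2
  have hA3 : A * A * A = (1 - x) ^ 2 := by
    rw [hA, ← Real.rpow_add ha, ← Real.rpow_add ha]
    norm_num
  have hx2 : x = (1 - x) ^ 2 := h1.trans hA3
  have hquad : x ^ 2 - 3 * x + 1 = 0 := by nlinarith [hx2]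
  have hs2 := sqrt5_sq
  have hfac : (x - (3 - Real.sqrt 5) / 2) * (x - (3 + Real.sqrt 5) / 2) = 0 := by
    linear_combination hquad - hs2 / 4
  rcases mul_eq_zero.mp hfac with h | h
  · rw [sub_eq_zero] at h
    rw [h]
  · exfalso
    have := sub_eq_zero.mp h
    have h2 := sqrt5_gt2
    rw [this] at hx1
    linarith

theorem stmt10 :
    (∃! f : ℝ × ℝ,
      (0 < f.1 ∧ f.1 < 1 ∧ 0 < f.2 ∧ f.2 < 1) ∧
      f.1 = (1 - f.1) ^ ((4 : ℝ) / 3) * (1 - f.2) ^ ((2 : ℝ) / 3) ∧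
      f.2 = (1 - f.1) ^ ((2 : ℝ) / 3) * (1 - f.2) ^ ((4 : ℝ) / 3)) ∧
    ∀ f : ℝ × ℝ,
      (0 < f.1 ∧ f.1 < 1 ∧ 0 < f.2 ∧ f.2 < 1) →
      f.1 = (1 - f.1) ^ ((4 : ℝ) / 3) * (1 - f.2) ^ ((2 : ℝ) / 3) →
      f.2 = (1 - f.1) ^ ((2 : ℝ) / 3) * (1 - f.2) ^ ((4 : ℝ) / 3) →
      6 / Real.pi ^ 2 * (RogersL f.1 + RogersL f.2) = 4 / 5 := by
  constructor
  · refine ⟨((3 - Real.sqrt 5) / 2, (3 - Real.sqrt 5) / 2),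
      ⟨⟨sol_val.1, sol_val.2, sol_val.1, sol_val.2⟩, ?_, ?_⟩, ?_⟩
    · exact sol_eq_rpow
    · show (3 - Real.sqrt 5) / 2 = (1 - (3 - Real.sqrt 5) / 2) ^ ((2:ℝ)/3) *
        (1 - (3 - Real.sqrt 5) / 2) ^ ((4:ℝ)/3)
      rw [mul_comm]
      exact sol_eq_rpow
    · rintro y ⟨hy1, hy2, hy3⟩
      exact sol_unique y hy1 hy2 hy3
  · intro f hc h1 h2
    have hf := sol_unique f hc h1 h2
    rw [hf]
    show 6 / Real.pi ^ 2 * (RogersL ((3 - Real.sqrt 5) / 2) + RogersL ((3 - Real.sqrt 5) / 2)) = 4 / 5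
    rw [rogers_value]
    have hπ := Real.pi_ne_zero
    field_simp
    ring
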